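/- arXiv:2301.06237 — 2 statements merged into one kernel-verified Lean document; each statement's English description precedes it below -/
import Mathlib

section
/- Let Σ be an alphabet with at least two distinct letters. For every Boolean combination φ of word equations (grammar: t ::= n | α | t∘t with n ∈ Σ and α a sequence variable; φ ::= t == t | ¬φ | φ∧φ | φ∨φ) there exist word-equation terms U and V, built from letters of Σ, the sequence variables of φ, and finitely many fresh sequence variables β1,…,βl, such that for every assignment s of the sequence variables of φ into Σ*: s satisfies φ if and only if there exist words w1,…,wl ∈ Σ* such that the assignment s extended by βi ↦ wi satisfies the single word equation U == V. -/
/-! Every Boolean combination of word equations over an alphabet `σ` with at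
least two distinct letters is equivalent to a single word equation, possibly
with finitely many fresh (existentially read) sequence variables. -/

/-- Word-equation terms over alphabet `σ` and sequence variables `ν`. -/
inductive WTerm (σ ν : Type*) : Type _
  | letter : σ → WTerm σ ν
  | svar : ν → WTerm σ ν
  | conc : WTerm σ ν → WTerm σ ν → WTerm σ ν

/-- Value of a term under an assignment of words to the sequence variables. -/
def WTerm.eval {σ ν : Type*} (s : ν → List σ) : WTerm σ ν → List σ
  | .letter c => [c]
  | .svar a => s a
  | .conc t₁ t₂ => t₁.eval s ++ t₂.eval s

/-- Boolean combinations of word equations. -/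
inductive WFormula (σ ν : Type*) : Type _
  | eq : WTerm σ ν → WTerm σ ν → WFormula σ ν
  | not : WFormula σ ν → WFormula σ ν
  | and : WFormula σ ν → WFormula σ ν → WFormula σ ν
  | or : WFormula σ ν → WFormula σ ν → WFormula σ ν

/-- Classical satisfaction of a Boolean combination of word equations. -/
def WFormula.Sat {σ ν : Type*} (s : ν → List σ) : WFormula σ ν → Prop
  | .eq t₁ t₂ => t₁.eval s = t₂.eval s
  | .not φ => ¬ φ.Sat s
  | .and φ₁ φ₂ => φ₁.Sat s ∧ φ₂.Sat s
  | .or φ₁ φ₂ => φ₁.Sat s ∨ φ₂.Sat s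

namespace WEAux

variable {σ ν μ κ : Type*}

/-- Rename variables in a term. -/
def wmap (f : ν → μ) : WTerm σ ν → WTerm σ μ
  | .letter c => .letter c
  | .svar v => .svar (f v)
  | .conc t₁ t₂ => .conc (wmap f t₁) (wmap f t₂)

lemma eval_wmap (f : ν → μ) (s : μ → List σ) :
    ∀ t : WTerm σ ν, (wmap f t).eval s = t.eval (s ∘ f)
  | .letter c => rfl
  | .svar v => rfl
  | .conc t₁ t₂ => by
      simp only [wmap, WTerm.eval, eval_wmap f s t₁, eval_wmap f s t₂]

/-- Pairing of two terms into one, injective on evaluations. -/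
def tpair (a b : σ) (x u : WTerm σ ν) : WTerm σ ν :=
  .conc x (.conc (.letter a) (.conc u (.conc x (.conc (.letter b) u))))

/-- List-level pairing. -/
def pkey (a b : σ) (x u : List σ) : List σ :=
  x ++ a :: (u ++ (x ++ b :: u))

lemma eval_tpair (a b : σ) (x u : WTerm σ ν) (s : ν → List σ) :
    (tpair a b x u).eval s = pkey a b (x.eval s) (u.eval s) := by
  simp [tpair, pkey, WTerm.eval]

lemma pkey_def (a b : σ) (x u : List σ) :
    pkey a b x u = x ++ a :: (u ++ (x ++ b :: u)) := rfl

lemma pkey_restruct (a b : σ) (x u : List σ) :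
    pkey a b x u = (x ++ a :: u) ++ (x ++ b :: u) := by
  simp [pkey]

lemma two_eq_aux {a b : σ} (hab : a ≠ b) {x u y v : List σ}
    (h1 : x ++ a :: u = y ++ a :: v) (h2 : x ++ b :: u = y ++ b :: v)
    (hlt : x.length < y.length) : False := by
  have e1 : (x ++ a :: u)[x.length]? = some a := by
    rw [List.getElem?_append_right (le_refl _)]; simp
  have e2 : (x ++ b :: u)[x.length]? = some b := by
    rw [List.getElem?_append_right (le_refl _)]; simp
  have f1 : (y ++ a :: v)[x.length]? = y[x.length]? := List.getElem?_append_left hlt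
  have f2 : (y ++ b :: v)[x.length]? = y[x.length]? := List.getElem?_append_left hlt
  rw [h1] at e1; rw [h2] at e2
  rw [f1] at e1; rw [f2] at e2
  rw [e1] at e2
  exact hab (Option.some.inj e2)

lemma two_eq {a b : σ} (hab : a ≠ b) {x u y v : List σ}
    (h1 : x ++ a :: u = y ++ a :: v) (h2 : x ++ b :: u = y ++ b :: v) :
    x = y ∧ u = v := by
  rcases lt_trichotomy x.length y.length with h | h | h
  · exact absurd (two_eq_aux hab h1 h2 h) (fun f => f)
  · obtain ⟨hx, hu⟩ := List.append_inj h1 h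
    exact ⟨hx, List.cons_injective hu⟩
  · exact absurd (two_eq_aux hab h1.symm h2.symm h) (fun f => f)

lemma pkey_inj {a b : σ} (hab : a ≠ b) {x u y v : List σ} :
    pkey a b x u = pkey a b y v ↔ x = y ∧ u = v := by
  constructor
  · intro h
    rw [pkey_restruct, pkey_restruct] at h
    have hlen : (x ++ a :: u).length = (y ++ a :: v).length := by
      have := congrArg List.length h
      simp only [List.length_append, List.length_cons] at this ⊢
      omega
    obtain ⟨h1, h2⟩ := List.append_inj h hlen
    exact two_eq hab h1 h2
  · rintro ⟨rfl, rfl⟩; rfl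

end WEAux

namespace WEAux2

open WEAux

variable {σ ν : Type*}

/-- A predicate on assignments is expressible by a single word equation
with finitely many fresh variables. -/
def Expressible (σ : Type*) {ν : Type*} (a b : σ) (P : (ν → List σ) → Prop) : Prop :=
  ∃ (κ : Type) (_ : Fintype κ) (U V : WTerm σ (ν ⊕ κ)),
    ∀ s : ν → List σ,
      P s ↔ ∃ w : κ → List σ, U.eval (Sum.elim s w) = V.eval (Sum.elim s w)

variable {a b : σ}

lemma Expressible.congr {P Q : (ν → List σ) → Prop} (h : ∀ s, P s ↔ Q s)
    (hP : Expressible σ a b P) : Expressible σ a b Q := by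
  obtain ⟨κ, i, U, V, hU⟩ := hP
  exact ⟨κ, i, U, V, fun s => (h s).symm.trans (hU s)⟩

lemma elim_comp_inl (s : ν → List σ) {κ : Type*} (w : κ → List σ) :
    (Sum.elim s w) ∘ (Sum.inl : ν → ν ⊕ κ) = s := rfl

/-- Atom: an equation between two terms is expressible. -/
lemma expressible_eq (t₁ t₂ : WTerm σ ν) :
    Expressible σ a b (fun s => t₁.eval s = t₂.eval s) := by
  refine ⟨PEmpty, inferInstance, wmap Sum.inl t₁, wmap Sum.inl t₂, fun s => ?_⟩
  constructor
  · intro h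
    exact ⟨fun x => PEmpty.elim x, by
      simp only [eval_wmap]
      exact h⟩
  · rintro ⟨w, hw⟩
    simpa only [eval_wmap, Sum.elim_comp_inl] using hw

/-- False is expressible. -/
lemma expressible_false (hab : a ≠ b) :
    Expressible σ a b (fun _ : ν → List σ => False) := by
  refine ⟨PEmpty, inferInstance, .letter a, .letter b, fun s => ?_⟩
  simp only [false_iff, not_exists]
  intro w h
  simp only [WTerm.eval] at h
  exact hab (by injection h)

end WEAux2

namespace WEAux2

open WEAux

variable {σ ν : Type*} {a b : σ}

lemma elim_comp_map (s : ν → List σ) {κ₁ κ₂ : Type*} (w : κ₂ → List σ) (f : κ₁ → κ₂) :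
    Sum.elim s w ∘ Sum.map id f = Sum.elim s (w ∘ f) := by
  funext x; cases x <;> rfl

lemma Expressible.and (hab : a ≠ b) {P Q : (ν → List σ) → Prop}
    (hP : Expressible σ a b P) (hQ : Expressible σ a b Q) :
    Expressible σ a b (fun s => P s ∧ Q s) := by
  obtain ⟨κ₁, i₁, U₁, V₁, h₁⟩ := hP
  obtain ⟨κ₂, i₂, U₂, V₂, h₂⟩ := hQ
  refine ⟨κ₁ ⊕ κ₂, inferInstance,
    tpair a b (wmap (Sum.map id Sum.inl) U₁) (wmap (Sum.map id Sum.inr) U₂),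
    tpair a b (wmap (Sum.map id Sum.inl) V₁) (wmap (Sum.map id Sum.inr) V₂), fun s => ?_⟩
  show P s ∧ Q s ↔ _
  rw [h₁ s, h₂ s]
  constructor
  · rintro ⟨⟨w₁, hw₁⟩, ⟨w₂, hw₂⟩⟩
    refine ⟨Sum.elim w₁ w₂, ?_⟩
    rw [eval_tpair, eval_tpair, pkey_inj hab]
    simp only [eval_wmap, elim_comp_map]
    exact ⟨hw₁, hw₂⟩
  · rintro ⟨w, hw⟩
    rw [eval_tpair, eval_tpair, pkey_inj hab] at hw
    simp only [eval_wmap, elim_comp_map] at hw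
    exact ⟨⟨w ∘ Sum.inl, hw.1⟩, ⟨w ∘ Sum.inr, hw.2⟩⟩

end WEAux2

namespace WEGadget

open WEAux

variable {σ : Type*}

/-- If `W` is a prefix of `g ++ W ++ t` then `W` is periodic with period pattern `g`. -/
lemma prefix_period {g W t : List σ} (hg : g ≠ []) (h : W <+: g ++ (W ++ t)) :
    ∀ i, i < W.length → W[i]? = g[i % g.length]? := by
  intro i
  induction i using Nat.strong_induction_on with
  | _ i ih =>
    intro hi
    have hgl : 0 < g.length := List.length_pos_of_ne_nil hg
    obtain ⟨r, hr⟩ := h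
    have hWi : W[i]? = (g ++ (W ++ t))[i]? := by
      rw [← hr, List.getElem?_append_left]
      exact hi
    by_cases hcase : i < g.length
    · rw [List.getElem?_append_left hcase] at hWi
      rw [hWi, Nat.mod_eq_of_lt hcase]
    · push_neg at hcase
      rw [List.getElem?_append_right hcase] at hWi
      have hlt : i - g.length < W.length := by omega
      rw [List.getElem?_append_left hlt] at hWi
      rw [hWi, ih (i - g.length) (by omega) hlt, Nat.mod_eq_sub_mod hcase]

/-- Two `g`-periodic prefixes of equal length are equal. -/
lemma eq_of_period {g W₁ W₂ t₁ t₂ : List σ} (hg : g ≠ [])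
    (h₁ : W₁ <+: g ++ (W₁ ++ t₁)) (h₂ : W₂ <+: g ++ (W₂ ++ t₂))
    (hl : W₁.length = W₂.length) : W₁ = W₂ := by
  apply List.ext_getElem?
  intro i
  by_cases hi : i < W₁.length
  · rw [prefix_period hg h₁ i hi, prefix_period hg h₂ i (hl ▸ hi)]
  · rw [List.getElem?_eq_none (by omega), List.getElem?_eq_none (by omega)]

lemma pkey_length (a b : σ) (x u : List σ) :
    (pkey a b x u).length = 2 * x.length + 2 * u.length + 2 := by
  simp [pkey]; omega

lemma pkey_ne_nil (a b : σ) (x u : List σ) : pkey a b x u ≠ [] := by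
  simp [pkey]

/-- The core "guarded equation" soundness: if the two pin equations hold
and `g ≠ []` then `A = B`. -/
lemma pin_sound {g u A B x₁ y₁ x₂ y₂ : List σ} (hg : g ≠ [])
    (h₁ : u ++ (A ++ x₁) = g ++ (u ++ (A ++ y₁)))
    (h₂ : u ++ (B ++ x₂) = g ++ (u ++ (B ++ y₂)))
    (hl : A.length = B.length) : A = B := by
  have p₁ : (u ++ A) <+: g ++ ((u ++ A) ++ y₁) := by
    refine ⟨x₁, ?_⟩
    simpa [List.append_assoc] using h₁
  have p₂ : (u ++ B) <+: g ++ ((u ++ B) ++ y₂) := by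
    refine ⟨x₂, ?_⟩
    simpa [List.append_assoc] using h₂
  have := eq_of_period hg p₁ p₂ (by simp [hl])
  exact List.append_cancel_left this

end WEGadget


attribute [irreducible] WEAux.tpair WEAux.pkey

namespace WEAux2

open WEAux WEGadget

variable {σ ν : Type*} {a b : σ} {κ₁ κ₂ : Type}

def sv14 (κ₁ κ₂ : Type) (n : Fin 14) : WTerm σ (ν ⊕ ((κ₁ ⊕ κ₂) ⊕ Fin 14)) :=
  .svar (Sum.inr (Sum.inr n))

def jOT (κ₁ κ₂ : Type) : (ν ⊕ κ₁) → ν ⊕ ((κ₁ ⊕ κ₂) ⊕ Fin 14) :=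
  Sum.map id (fun k => Sum.inl (Sum.inl k))

def jOT' (κ₁ κ₂ : Type) : (ν ⊕ κ₂) → ν ⊕ ((κ₁ ⊕ κ₂) ⊕ Fin 14) :=
  Sum.map id (fun k => Sum.inl (Sum.inr k))

def orU (a b : σ) (U₁ V₁ : WTerm σ (ν ⊕ κ₁)) (U₂ V₂ : WTerm σ (ν ⊕ κ₂)) :
    WTerm σ (ν ⊕ ((κ₁ ⊕ κ₂) ⊕ Fin 14)) :=
  tpair a b (.conc (sv14 κ₁ κ₂ 0) (sv14 κ₁ κ₂ 1))
    (tpair a b (.conc (sv14 κ₁ κ₂ 4) (.conc (tpair a b (wmap (jOT κ₁ κ₂) U₁) (wmap (jOT κ₁ κ₂) V₁)) (sv14 κ₁ κ₂ 5)))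
      (tpair a b (.conc (sv14 κ₁ κ₂ 4) (.conc (tpair a b (wmap (jOT κ₁ κ₂) V₁) (wmap (jOT κ₁ κ₂) U₁)) (sv14 κ₁ κ₂ 7)))
        (tpair a b (.conc (sv14 κ₁ κ₂ 9) (.conc (tpair a b (wmap (jOT' κ₁ κ₂) U₂) (wmap (jOT' κ₁ κ₂) V₂)) (sv14 κ₁ κ₂ 10)))
          (.conc (sv14 κ₁ κ₂ 9) (.conc (tpair a b (wmap (jOT' κ₁ κ₂) V₂) (wmap (jOT' κ₁ κ₂) U₂)) (sv14 κ₁ κ₂ 12))))))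

def orV (a b : σ) (U₁ V₁ : WTerm σ (ν ⊕ κ₁)) (U₂ V₂ : WTerm σ (ν ⊕ κ₂)) :
    WTerm σ (ν ⊕ ((κ₁ ⊕ κ₂) ⊕ Fin 14)) :=
  tpair a b (.conc (sv14 κ₁ κ₂ 2) (.conc (.letter a) (sv14 κ₁ κ₂ 3)))
    (tpair a b (.conc (sv14 κ₁ κ₂ 0) (.conc (sv14 κ₁ κ₂ 4) (.conc (tpair a b (wmap (jOT κ₁ κ₂) U₁) (wmap (jOT κ₁ κ₂) V₁)) (sv14 κ₁ κ₂ 6))))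
      (tpair a b (.conc (sv14 κ₁ κ₂ 0) (.conc (sv14 κ₁ κ₂ 4) (.conc (tpair a b (wmap (jOT κ₁ κ₂) V₁) (wmap (jOT κ₁ κ₂) U₁)) (sv14 κ₁ κ₂ 8))))
        (tpair a b (.conc (sv14 κ₁ κ₂ 1) (.conc (sv14 κ₁ κ₂ 9) (.conc (tpair a b (wmap (jOT' κ₁ κ₂) U₂) (wmap (jOT' κ₁ κ₂) V₂)) (sv14 κ₁ κ₂ 11))))
          (.conc (sv14 κ₁ κ₂ 1) (.conc (sv14 κ₁ κ₂ 9) (.conc (tpair a b (wmap (jOT' κ₁ κ₂) V₂) (wmap (jOT' κ₁ κ₂) U₂)) (sv14 κ₁ κ₂ 13)))))))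

lemma Expressible.or (hab : a ≠ b) {P Q : (ν → List σ) → Prop}
    (hP : Expressible σ a b P) (hQ : Expressible σ a b Q) :
    Expressible σ a b (fun s => P s ∨ Q s) := by
  classical
  obtain ⟨κ₁, i₁, U₁, V₁, h₁⟩ := hP
  obtain ⟨κ₂, i₂, U₂, V₂, h₂⟩ := hQ
  refine ⟨(κ₁ ⊕ κ₂) ⊕ Fin 14, inferInstance, orU a b U₁ V₁ U₂ V₂, orV a b U₁ V₁ U₂ V₂,
    fun s => ?_⟩
  show P s ∨ Q s ↔ _
  constructor
  · rintro (hp | hq)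
    · rw [h₁ s] at hp
      obtain ⟨wP, hwP⟩ := hp
      set U1v := U₁.eval (Sum.elim s wP) with hU1v
      set V1v := V₁.eval (Sum.elim s wP) with hV1v
      set A1v := pkey a b U1v V1v with hA1v
      set wBig : ((κ₁ ⊕ κ₂) ⊕ Fin 14) → List σ := Sum.elim
        (Sum.elim wP (fun _ => []))
        ![A1v, [], U1v, V1v ++ (U1v ++ b :: V1v), [], A1v, [], A1v, [], [], [], [], [], []]
        with hwBig
      refine ⟨wBig, ?_⟩
      have hcomp : (Sum.elim s (wBig ∘ (fun k => Sum.inl (Sum.inl k)))) = Sum.elim s wP := by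
        funext x; cases x <;> rfl
      simp only [orU, orV, eval_tpair, WTerm.eval, eval_wmap, jOT, jOT', elim_comp_map,
        pkey_inj hab, sv14, Sum.elim_inr, hcomp]
      have w0 : wBig (Sum.inr 0) = A1v := rfl
      have w1 : wBig (Sum.inr 1) = [] := rfl
      have w2 : wBig (Sum.inr 2) = U1v := rfl
      have w3 : wBig (Sum.inr 3) = V1v ++ (U1v ++ b :: V1v) := rfl
      have w4 : wBig (Sum.inr 4) = [] := rfl
      have w5 : wBig (Sum.inr 5) = A1v := rfl
      have w6 : wBig (Sum.inr 6) = [] := rfl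
      have w7 : wBig (Sum.inr 7) = A1v := rfl
      have w8 : wBig (Sum.inr 8) = [] := rfl
      have w9 : wBig (Sum.inr 9) = [] := rfl
      have w10 : wBig (Sum.inr 10) = [] := rfl
      have w11 : wBig (Sum.inr 11) = [] := rfl
      have w12 : wBig (Sum.inr 12) = [] := rfl
      have w13 : wBig (Sum.inr 13) = [] := rfl
      rw [w0, w1, w2, w3, w4, w5, w6, w7, w8, w9, w10, w11, w12, w13]
      simp only [← hU1v, ← hV1v, ← hA1v, ← hwP]
      have hA' : A1v = WEAux.pkey a b U1v U1v := by rw [hA1v, hwP]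
      refine ⟨?_, ?_, ?_, ?_, ?_⟩
      · rw [hA', hwP, pkey_def]; simp
      · rw [hA']; simp
      · rw [hA']; simp
      · simp
      · simp
    · rw [h₂ s] at hq
      obtain ⟨wQ, hwQ⟩ := hq
      set U2v := U₂.eval (Sum.elim s wQ) with hU2v
      set V2v := V₂.eval (Sum.elim s wQ) with hV2v
      set A2v := pkey a b U2v V2v with hA2v
      set wBig : ((κ₁ ⊕ κ₂) ⊕ Fin 14) → List σ := Sum.elim
        (Sum.elim (fun _ => []) wQ)
        ![[], A2v, U2v, V2v ++ (U2v ++ b :: V2v), [], [], [], [], [], [], A2v, [], A2v, []]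
        with hwBig
      refine ⟨wBig, ?_⟩
      have hcomp : (Sum.elim s (wBig ∘ (fun k => Sum.inl (Sum.inr k)))) = Sum.elim s wQ := by
        funext x; cases x <;> rfl
      simp only [orU, orV, eval_tpair, WTerm.eval, eval_wmap, jOT, jOT', elim_comp_map,
        pkey_inj hab, sv14, Sum.elim_inr, hcomp]
      have w0 : wBig (Sum.inr 0) = [] := rfl
      have w1 : wBig (Sum.inr 1) = A2v := rfl
      have w2 : wBig (Sum.inr 2) = U2v := rfl
      have w3 : wBig (Sum.inr 3) = V2v ++ (U2v ++ b :: V2v) := rfl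
      have w4 : wBig (Sum.inr 4) = [] := rfl
      have w5 : wBig (Sum.inr 5) = [] := rfl
      have w6 : wBig (Sum.inr 6) = [] := rfl
      have w7 : wBig (Sum.inr 7) = [] := rfl
      have w8 : wBig (Sum.inr 8) = [] := rfl
      have w9 : wBig (Sum.inr 9) = [] := rfl
      have w10 : wBig (Sum.inr 10) = A2v := rfl
      have w11 : wBig (Sum.inr 11) = [] := rfl
      have w12 : wBig (Sum.inr 12) = A2v := rfl
      have w13 : wBig (Sum.inr 13) = [] := rfl
      rw [w0, w1, w2, w3, w4, w5, w6, w7, w8, w9, w10, w11, w12, w13]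
      simp only [← hU2v, ← hV2v, ← hA2v, ← hwQ]
      have hA' : A2v = WEAux.pkey a b U2v U2v := by rw [hA2v, hwQ]
      refine ⟨?_, ?_, ?_, ?_, ?_⟩
      · rw [hA', hwQ, pkey_def]; simp
      · simp
      · simp
      · rw [hA']; simp
      · rw [hA']; simp
  · rintro ⟨w, hw⟩
    simp only [orU, orV, eval_tpair, WTerm.eval, eval_wmap, jOT, jOT', elim_comp_map,
      pkey_inj hab, sv14, Sum.elim_inr] at hw
    obtain ⟨c0, c1, c2, c3, c4⟩ := hw
    have hgne : w (Sum.inr 0) ≠ [] ∨ w (Sum.inr 1) ≠ [] := by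
      rcases eq_or_ne (w (Sum.inr 0)) [] with h0 | h0
      · right
        intro h1
        rw [h0, h1] at c0
        have := congrArg List.length c0
        simp at this
      · exact Or.inl h0
    rcases hgne with hg | hg
    · refine Or.inl ((h₁ s).mpr ⟨w ∘ (fun k => Sum.inl (Sum.inl k)), ?_⟩)
      have hl : (WEAux.pkey a b (U₁.eval (Sum.elim s (w ∘ fun k => Sum.inl (Sum.inl k))))
            (V₁.eval (Sum.elim s (w ∘ fun k => Sum.inl (Sum.inl k))))).length
          = (WEAux.pkey a b (V₁.eval (Sum.elim s (w ∘ fun k => Sum.inl (Sum.inl k))))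
            (U₁.eval (Sum.elim s (w ∘ fun k => Sum.inl (Sum.inl k))))).length := by
        rw [pkey_length, pkey_length]; omega
      have := pin_sound hg c1 c2 hl
      exact ((pkey_inj hab).mp this).1
    · refine Or.inr ((h₂ s).mpr ⟨w ∘ (fun k => Sum.inl (Sum.inr k)), ?_⟩)
      have hl : (WEAux.pkey a b (U₂.eval (Sum.elim s (w ∘ fun k => Sum.inl (Sum.inr k))))
            (V₂.eval (Sum.elim s (w ∘ fun k => Sum.inl (Sum.inr k))))).length
          = (WEAux.pkey a b (V₂.eval (Sum.elim s (w ∘ fun k => Sum.inl (Sum.inr k))))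
            (U₂.eval (Sum.elim s (w ∘ fun k => Sum.inl (Sum.inr k))))).length := by
        rw [pkey_length, pkey_length]; omega
      have := pin_sound hg c3 c4 hl
      exact ((pkey_inj hab).mp this).1

end WEAux2

namespace WEAux2
open WEAux
variable {σ ν : Type*} {a b : σ}

lemma Expressible.listOrMap {α : Type*} (hab : a ≠ b) (l : List α)
    (p : α → (ν → List σ) → Prop)
    (h : ∀ x ∈ l, Expressible σ a b (p x)) :
    Expressible σ a b (fun s => ∃ x ∈ l, p x s) := by
  induction l with
  | nil => exact (expressible_false hab).congr (by simp)
  | cons q qs ih =>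
      refine (Expressible.or hab (h q (by simp))
        (ih (fun x hx => h x (by simp [hx])))).congr (fun s => ?_)
      simp only [List.mem_cons]
      constructor
      · rintro (hq | ⟨x, hx, hpx⟩)
        · exact ⟨q, Or.inl rfl, hq⟩
        · exact ⟨x, Or.inr hx, hpx⟩
      · rintro ⟨x, (rfl | hx), hpx⟩
        · exact Or.inl hpx
        · exact Or.inr ⟨x, hx, hpx⟩

/-- t₁ is a proper prefix of t₂ with next letter c. -/
lemma expressible_ext (c : σ) (t₁ t₂ : WTerm σ ν) :
    Expressible σ a b (fun s => ∃ z, t₂.eval s = t₁.eval s ++ c :: z) := by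
  refine ⟨Unit, inferInstance, wmap Sum.inl t₂,
    .conc (wmap Sum.inl t₁) (.conc (.letter c) (.svar (Sum.inr ()))), fun s => ?_⟩
  simp only [WTerm.eval, eval_wmap, Sum.elim_comp_inl]
  constructor
  · rintro ⟨z, hz⟩
    exact ⟨fun _ => z, by simpa using hz⟩
  · rintro ⟨w, hw⟩
    exact ⟨w (), by simpa using hw⟩

end WEAux2

namespace WEAux2

open WEAux

variable {σ ν : Type*} {a b : σ}

/-- t₁, t₂ share a prefix then differ by letters c, d. -/
lemma expressible_diff (c d : σ) (hab : a ≠ b) (t₁ t₂ : WTerm σ ν) :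
    Expressible σ a b
      (fun s => ∃ p z₁ z₂, t₁.eval s = p ++ c :: z₁ ∧ t₂.eval s = p ++ d :: z₂) := by
  classical
  refine ⟨Fin 3, inferInstance,
    tpair a b (wmap Sum.inl t₁) (wmap Sum.inl t₂),
    tpair a b
      (.conc (.svar (Sum.inr 0)) (.conc (.letter c) (.svar (Sum.inr 1))))
      (.conc (.svar (Sum.inr 0)) (.conc (.letter d) (.svar (Sum.inr 2)))), fun s => ?_⟩
  constructor
  · rintro ⟨p, z₁, z₂, h₁, h₂⟩
    refine ⟨![p, z₁, z₂], ?_⟩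
    rw [eval_tpair, eval_tpair, pkey_inj hab]
    simp only [eval_wmap, Sum.elim_comp_inl, WTerm.eval]
    constructor
    · simpa using h₁
    · simpa using h₂
  · rintro ⟨w, hw⟩
    rw [eval_tpair, eval_tpair, pkey_inj hab] at hw
    simp only [eval_wmap, Sum.elim_comp_inl, WTerm.eval] at hw
    exact ⟨w 0, w 1, w 2, by simpa using hw.1, by simpa using hw.2⟩

/-- Case analysis for inequality of lists. -/
lemma ne_cases {l₁ l₂ : List σ} :
    l₁ ≠ l₂ ↔ ((∃ c z, l₂ = l₁ ++ c :: z) ∨ (∃ c z, l₁ = l₂ ++ c :: z) ∨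
      (∃ c d p z₁ z₂, c ≠ d ∧ l₁ = p ++ c :: z₁ ∧ l₂ = p ++ d :: z₂)) := by
  constructor
  · intro hne
    induction l₁ generalizing l₂ with
    | nil =>
        cases l₂ with
        | nil => exact absurd rfl hne
        | cons y ys => exact Or.inl ⟨y, ys, by simp⟩
    | cons x xs ih =>
        cases l₂ with
        | nil => exact Or.inr (Or.inl ⟨x, xs, by simp⟩)
        | cons y ys =>
            by_cases hxy : x = y
            · subst hxy
              have hne' : xs ≠ ys := fun h => hne (by rw [h])
              rcases ih hne' with ⟨c, z, h⟩ | ⟨c, z, h⟩ | ⟨c, d, p, z₁, z₂, hcd, h₁, h₂⟩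
              · exact Or.inl ⟨c, z, by simp [h]⟩
              · exact Or.inr (Or.inl ⟨c, z, by simp [h]⟩)
              · exact Or.inr (Or.inr ⟨c, d, x :: p, z₁, z₂, hcd, by simp [h₁], by simp [h₂]⟩)
            · exact Or.inr (Or.inr ⟨x, y, [], xs, ys, hxy, by simp, by simp⟩)
  · rintro (⟨c, z, h⟩ | ⟨c, z, h⟩ | ⟨c, d, p, z₁, z₂, hcd, h₁, h₂⟩) heq
    · rw [heq] at h
      have := congrArg List.length h
      simp at this
    · rw [heq] at h
      have := congrArg List.length h
      simp at this
    · rw [heq, h₂] at h₁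
      have := List.append_cancel_left h₁
      exact hcd (by injection this with h' _; exact h'.symm)

/-- Inequality of two terms is expressible. -/
lemma expressible_ne [Fintype σ] (hab : a ≠ b) (t₁ t₂ : WTerm σ ν) :
    Expressible σ a b (fun s => t₁.eval s ≠ t₂.eval s) := by
  classical
  have e1 : Expressible σ a b (fun s => ∃ c ∈ (Finset.univ : Finset σ).toList,
      ∃ z, t₂.eval s = t₁.eval s ++ c :: z) :=
    Expressible.listOrMap hab _ _ (fun c _ => expressible_ext c t₁ t₂)
  have e2 : Expressible σ a b (fun s => ∃ c ∈ (Finset.univ : Finset σ).toList,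
      ∃ z, t₁.eval s = t₂.eval s ++ c :: z) :=
    Expressible.listOrMap hab _ _ (fun c _ => expressible_ext c t₂ t₁)
  have e3 : Expressible σ a b (fun s => ∃ cd ∈ ((Finset.univ : Finset (σ × σ)).filter
      (fun cd => cd.1 ≠ cd.2)).toList,
      ∃ p z₁ z₂, t₁.eval s = p ++ cd.1 :: z₁ ∧ t₂.eval s = p ++ cd.2 :: z₂) :=
    Expressible.listOrMap hab _ _ (fun cd _ => expressible_diff cd.1 cd.2 hab t₁ t₂)
  refine ((e1.or hab e2).or hab e3).congr (fun s => ?_)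
  rw [ne_cases]
  simp only [Finset.mem_toList, Finset.mem_univ, true_and, Finset.mem_filter, exists_prop]
  constructor
  · rintro ((⟨c, z, h⟩ | ⟨c, z, h⟩) | ⟨cd, hcd, p, z₁, z₂, h₁, h₂⟩)
    · exact Or.inl ⟨c, z, h⟩
    · exact Or.inr (Or.inl ⟨c, z, h⟩)
    · exact Or.inr (Or.inr ⟨cd.1, cd.2, p, z₁, z₂, hcd, h₁, h₂⟩)
  · rintro (⟨c, z, h⟩ | ⟨c, z, h⟩ | ⟨c, d, p, z₁, z₂, hcd, h₁, h₂⟩)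
    · exact Or.inl (Or.inl ⟨c, z, h⟩)
    · exact Or.inl (Or.inr ⟨c, z, h⟩)
    · exact Or.inr ⟨(c, d), hcd, p, z₁, z₂, h₁, h₂⟩

end WEAux2


/-- For every Boolean combination `φ` of word equations there are terms `U`,
`V` over the letters, the old sequence variables, and `l` fresh sequence
variables (the `Sum.inr` ones) such that an assignment `s` satisfies `φ` iff
it can be extended on the fresh variables so as to satisfy the single word
equation `U == V`. -/
theorem boolean_combination_to_single_word_equation
    {σ ν : Type*} [Fintype σ] (a b : σ) (hab : a ≠ b) (φ : WFormula σ ν) :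
    ∃ (l : ℕ) (U V : WTerm σ (ν ⊕ Fin l)),
      ∀ s : ν → List σ,
        φ.Sat s ↔
          ∃ w : Fin l → List σ,
            U.eval (Sum.elim s w) = V.eval (Sum.elim s w) := by
  classical
  have key : ∀ ψ : WFormula σ ν,
      WEAux2.Expressible σ a b ψ.Sat ∧ WEAux2.Expressible σ a b (fun s => ¬ ψ.Sat s) := by
    intro ψ
    induction ψ with
    | eq t₁ t₂ =>
        exact ⟨(WEAux2.expressible_eq t₁ t₂).congr (fun s => Iff.rfl),
               (WEAux2.expressible_ne hab t₁ t₂).congr (fun s => Iff.rfl)⟩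
    | not ψ ih =>
        exact ⟨ih.2.congr (fun s => Iff.rfl), ih.1.congr (fun s => by simp [WFormula.Sat])⟩
    | and ψ₁ ψ₂ ih₁ ih₂ =>
        refine ⟨(ih₁.1.and hab ih₂.1).congr (fun s => Iff.rfl),
          (ih₁.2.or hab ih₂.2).congr (fun s => ?_)⟩
        rw [show (WFormula.Sat s (ψ₁.and ψ₂)) = (WFormula.Sat s ψ₁ ∧ WFormula.Sat s ψ₂) from rfl]
        exact (not_and_or).symm
    | or ψ₁ ψ₂ ih₁ ih₂ =>
        refine ⟨(ih₁.1.or hab ih₂.1).congr (fun s => Iff.rfl),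
          (ih₁.2.and hab ih₂.2).congr (fun s => ?_)⟩
        rw [show (WFormula.Sat s (ψ₁.or ψ₂)) = (WFormula.Sat s ψ₁ ∨ WFormula.Sat s ψ₂) from rfl]
        exact (not_or).symm
  obtain ⟨κ, iκ, U, V, h⟩ := (key φ).1
  let e := @Fintype.equivFin κ iκ
  refine ⟨@Fintype.card κ iκ, WEAux.wmap (Sum.map id e) U, WEAux.wmap (Sum.map id e) V,
    fun s => ?_⟩
  rw [show (φ.Sat s ↔ _) from h s]
  constructor
  · rintro ⟨w, hw⟩
    refine ⟨w ∘ e.symm, ?_⟩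
    simp only [WEAux.eval_wmap, WEAux2.elim_comp_map]
    have : (w ∘ e.symm) ∘ e = w := by funext x; simp
    rw [this]
    exact hw
  · rintro ⟨w, hw⟩
    refine ⟨w ∘ e, ?_⟩
    simpa only [WEAux.eval_wmap, WEAux2.elim_comp_map] using hw
end

section
/- Let Σ* be the free monoid over an alphabet Σ containing two distinct letters a ≠ b. For all words x, y, u, v ∈ Σ*: (x = y and u = v) if and only if x·a·u·x·b·u = y·a·v·y·b·v. -/
/-! Encoding a conjunction of two word equations as a single word equation,
in the free monoid `List σ` over an alphabet `σ` with two distinct letters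
`a ≠ b`:  `(x = y ∧ u = v) ↔ x·a·u·x·b·u = y·a·v·y·b·v`. -/

lemma key_word_eq {σ : Type*} (a b : σ) (x y u v : List σ)
    (h : x ++ [a] ++ u ++ x ++ [b] ++ u = y ++ [a] ++ v ++ y ++ [b] ++ v)
    (hlt : x.length < y.length) : a = b := by
  have hl : x.length + u.length = y.length + v.length := by
    have := congrArg List.length h
    simp at this; omega
  have h' : (x ++ a :: u) ++ x ++ b :: u = (y ++ a :: v) ++ y ++ b :: v := by
    simpa [List.append_assoc] using h
  have e1 := congrArg (fun l => l[x.length]?) h'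
  have e2 := congrArg (fun l => l[x.length + u.length + x.length + 1]?) h'
  simp [List.getElem?_append, hlt, Nat.lt_irrefl] at e1 e2
  rw [if_neg (by omega), if_neg (by omega)] at e2
  have i1 : x.length + u.length + x.length + 1 - x.length = (x.length + u.length) + 1 := by omega
  have i2 : x.length + u.length + x.length + 1 - y.length = (x.length + v.length) + 1 := by omega
  rw [i1, i2, List.getElem?_cons_succ, List.getElem?_cons_succ,
      List.getElem?_append_right (by omega), List.getElem?_append_right (by omega),
      (by omega : x.length + u.length - u.length - x.length = 0), List.getElem?_cons_zero] at e2
  have i4 : x.length + v.length - v.length = x.length := by omega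
  rw [List.getElem?_append_right (by omega : v.length ≤ x.length + v.length), i4,
      List.getElem?_append_left hlt, List.getElem?_eq_getElem hlt] at e2
  have e1' : (x ++ a :: (u ++ (x ++ b :: u)))[x.length]'(by simp) = a := by
    rw [List.getElem_append_right (Nat.le_refl _)]
    simp
  rw [e1, ← Option.some_inj, ← e2]

theorem conj_of_word_equations_as_single_equation
    {σ : Type*} (a b : σ) (hab : a ≠ b) (x y u v : List σ) :
    (x = y ∧ u = v) ↔
      x ++ [a] ++ u ++ x ++ [b] ++ u = y ++ [a] ++ v ++ y ++ [b] ++ v := by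
  constructor
  · rintro ⟨rfl, rfl⟩; rfl
  · intro h
    rcases lt_trichotomy x.length y.length with hlt | heq | hgt
    · exact absurd (key_word_eq a b x y u v h hlt) hab
    · have h' : x ++ (a :: (u ++ (x ++ b :: u))) = y ++ (a :: (v ++ (y ++ b :: v))) := by
        simpa [List.append_assoc] using h
      obtain ⟨hxy, htl⟩ := List.append_inj h' heq
      subst hxy
      have hlu : u.length = v.length := by
        have := congrArg List.length h; simp at this; omega
      simp only [List.cons.injEq, true_and] at htl
      obtain ⟨huv, -⟩ := List.append_inj htl hlu
      exact ⟨rfl, huv⟩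
    · exact absurd (key_word_eq a b y x v u h.symm hgt) hab
end
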